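/- Let N ≥ 1 and T ≥ 2 be integers and consider panel data Y_{i,t} = μ_i + e_{i,t}, i = 1,…,N, t = 1,…,T (no change in the mean), where each μ_i is a real constant and, for each i, the random variables e_{i,1},…,e_{i,T} are independent, square-integrable, with mean 0 and variance σ_i². Let w_1,…,w_{T−1} be nonnegative weights, not all zero, and let σ̂²_{N,T}(w) = ( Σ_{k=1}^{T−1} m_T(k/T)² w_k )^{−1} · Σ_{k=1}^{T−1} m_T(k/T) w_k · z̄_k, where z̄_k = N^{−1} Σ_{i=1}^N Z_i(k/T)² and Z_i is the CUSUM process of panel i. Then E[ σ̂²_{N,T}(w) ] = N^{−1} Σ_{i=1}^N σ_i², i.e., the weighted least squares estimator is an exactly unbiased estimator of the mean variance σ̄_N² under the null hypothesis of no change. -/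

import Mathlib

open MeasureTheory ProbabilityTheory

/-- `m(s) = s(1-s)`. Note that `m_T(k/T) = m(k/T)` for integers `1 ≤ k ≤ T-1`. -/
noncomputable def m (s : ℝ) : ℝ := s * (1 - s)

/-- CUSUM process of the data `Y 1, …, Y T`:
`Z(s) = T^{-1/2} ∑_{k=1}^{⌊Ts⌋} (Y k - Ȳ_T)`. -/
noncomputable def cusum (T : ℕ) (Y : ℕ → ℝ) (s : ℝ) : ℝ :=
  (Real.sqrt T)⁻¹ * ∑ k ∈ Finset.Icc 1 (⌊(T : ℝ) * s⌋.toNat),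
    (Y k - (T : ℝ)⁻¹ * ∑ t ∈ Finset.Icc 1 T, Y t)

/-- Second moment of a linear combination of independent mean-zero variables. -/
lemma integral_sq_sum {Ω : Type*} [MeasurableSpace Ω] (P : Measure Ω) [IsProbabilityMeasure P]
    (T : ℕ) (X : ℕ → Ω → ℝ) (v : ℝ) (c : ℕ → ℝ)
    (hmeas : ∀ t, Measurable (X t))
    (hindep : iIndepFun (fun j : (Finset.Icc 1 T) => X (j : ℕ)) P)
    (hL2 : ∀ t ∈ Finset.Icc 1 T, MemLp (X t) 2 P)
    (hmean : ∀ t ∈ Finset.Icc 1 T, ∫ ω, X t ω ∂P = 0)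
    (hvar : ∀ t ∈ Finset.Icc 1 T, ∫ ω, (X t ω) ^ 2 ∂P = v) :
    ∫ ω, (∑ t ∈ Finset.Icc 1 T, c t * X t ω) ^ 2 ∂P
      = (∑ t ∈ Finset.Icc 1 T, (c t) ^ 2) * v := by
  have indep' : ∀ s ∈ Finset.Icc 1 T, ∀ t ∈ Finset.Icc 1 T, s ≠ t →
      IndepFun (X s) (X t) P := by
    intro s hs t ht hst
    exact hindep.indepFun (i := ⟨s, hs⟩) (j := ⟨t, ht⟩) (by simpa [Subtype.ext_iff] using hst)
  have hint : ∀ s ∈ Finset.Icc 1 T, ∀ t ∈ Finset.Icc 1 T,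
      Integrable (fun ω => (c s * X s ω) * (c t * X t ω)) P := by
    intro s hs t ht
    have h1 : (fun ω => (c s * X s ω) * (c t * X t ω))
        = fun ω => (c s * c t) * (X s ω * X t ω) := by ext ω; ring
    rw [h1]
    apply Integrable.const_mul
    rcases eq_or_ne s t with h | h
    · subst h
      simpa [pow_two] using (hL2 s hs).integrable_sq
    · exact (indep' s hs t ht h).integrable_mul ((hL2 s hs).integrable one_le_two)
        ((hL2 t ht).integrable one_le_two)
  have key : ∀ s ∈ Finset.Icc 1 T, ∀ t ∈ Finset.Icc 1 T,
      ∫ ω, (c s * X s ω) * (c t * X t ω) ∂P = if s = t then (c t) ^ 2 * v else 0 := by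
    intro s hs t ht
    rcases eq_or_ne s t with h | h
    · subst h
      rw [if_pos rfl]
      have h1 : (fun ω => (c s * X s ω) * (c s * X s ω))
          = fun ω => (c s) ^ 2 * (X s ω) ^ 2 := by ext ω; ring
      calc ∫ ω, (c s * X s ω) * (c s * X s ω) ∂P
          = ∫ ω, (c s) ^ 2 * (X s ω) ^ 2 ∂P := by rw [h1]
        _ = (c s) ^ 2 * ∫ ω, (X s ω) ^ 2 ∂P := integral_const_mul _ _
        _ = (c s) ^ 2 * v := by rw [hvar s hs]
    · rw [if_neg h]
      have h1 : (fun ω => (c s * X s ω) * (c t * X t ω))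
          = fun ω => (c s * c t) * (X s ω * X t ω) := by ext ω; ring
      have h0 : ∫ ω, X s ω * X t ω ∂P = (∫ ω, X s ω ∂P) * ∫ ω, X t ω ∂P :=
        (indep' s hs t ht h).integral_fun_mul_eq_mul_integral (hmeas s).aestronglyMeasurable
          (hmeas t).aestronglyMeasurable
      rw [h1, integral_const_mul, h0, hmean s hs, hmean t ht]
      ring
  have expand : ∀ ω : Ω, (∑ t ∈ Finset.Icc 1 T, c t * X t ω) ^ 2
      = ∑ s ∈ Finset.Icc 1 T, ∑ t ∈ Finset.Icc 1 T, (c s * X s ω) * (c t * X t ω) := by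
    intro ω
    rw [sq, Finset.sum_mul_sum]
  calc ∫ ω, (∑ t ∈ Finset.Icc 1 T, c t * X t ω) ^ 2 ∂P
      = ∫ ω, ∑ s ∈ Finset.Icc 1 T, ∑ t ∈ Finset.Icc 1 T,
          (c s * X s ω) * (c t * X t ω) ∂P := by
        exact integral_congr_ae (Filter.Eventually.of_forall fun ω => expand ω)
    _ = ∑ s ∈ Finset.Icc 1 T, ∫ ω, ∑ t ∈ Finset.Icc 1 T,
          (c s * X s ω) * (c t * X t ω) ∂P := by
        exact integral_finset_sum _ fun s hs =>
          integrable_finset_sum _ fun t ht => hint s hs t ht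
    _ = ∑ s ∈ Finset.Icc 1 T, ∑ t ∈ Finset.Icc 1 T,
          ∫ ω, (c s * X s ω) * (c t * X t ω) ∂P := by
        exact Finset.sum_congr rfl fun s hs =>
          integral_finset_sum _ fun t ht => hint s hs t ht
    _ = ∑ s ∈ Finset.Icc 1 T, ∑ t ∈ Finset.Icc 1 T,
          (if s = t then (c t) ^ 2 * v else 0) := by
        exact Finset.sum_congr rfl fun s hs => Finset.sum_congr rfl fun t ht => key s hs t ht
    _ = ∑ s ∈ Finset.Icc 1 T, (c s) ^ 2 * v := by
        refine Finset.sum_congr rfl fun s hs => ?_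
        rw [Finset.sum_ite_eq (Finset.Icc 1 T) s (fun t => (c t) ^ 2 * v), if_pos hs]
    _ = (∑ t ∈ Finset.Icc 1 T, (c t) ^ 2) * v := by rw [Finset.sum_mul]

lemma coeff_facts (T k : ℕ) (hT : 2 ≤ T) (hk1 : 1 ≤ k) (hk2 : k ≤ T - 1) :
    (∑ t ∈ Finset.Icc 1 T, ((if t ≤ k then (1:ℝ) else 0) - (k:ℝ)/T) = 0)
    ∧ (∑ t ∈ Finset.Icc 1 T, ((if t ≤ k then (1:ℝ) else 0) - (k:ℝ)/T) ^ 2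
        = (T:ℝ) * m ((k:ℝ)/T))
    ∧ ∀ g : ℕ → ℝ, ∑ t ∈ Finset.Icc 1 k, (g t - (T:ℝ)⁻¹ * ∑ s ∈ Finset.Icc 1 T, g s)
        = ∑ t ∈ Finset.Icc 1 T, ((if t ≤ k then (1:ℝ) else 0) - (k:ℝ)/T) * g t := by
  have hkT : k < T := by omega
  have hT0 : (T:ℝ) ≠ 0 := by positivity
  have hfilter : (Finset.Icc 1 T).filter (· ≤ k) = Finset.Icc 1 k := by
    ext t
    simp only [Finset.mem_filter, Finset.mem_Icc]
    omega
  have hind : ∀ g : ℕ → ℝ,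
      ∑ t ∈ Finset.Icc 1 T, (if t ≤ k then (1:ℝ) else 0) * g t
        = ∑ t ∈ Finset.Icc 1 k, g t := by
    intro g
    simp_rw [ite_mul, one_mul, zero_mul]
    rw [← Finset.sum_filter, hfilter]
  have hcard1 : ∑ t ∈ Finset.Icc 1 T, (if t ≤ k then (1:ℝ) else 0) = (k:ℝ) := by
    have := hind (fun _ => (1:ℝ))
    simpa [Nat.card_Icc] using this
  have hTk : (T:ℝ) * ((k:ℝ)/T) = (k:ℝ) := by field_simp
  refine ⟨?_, ?_, ?_⟩
  · rw [Finset.sum_sub_distrib, hcard1, Finset.sum_const, Nat.card_Icc]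
    simp only [Nat.add_sub_cancel, nsmul_eq_mul]
    rw [hTk]
    ring
  · have hsq : ∀ t, ((if t ≤ k then (1:ℝ) else 0) - (k:ℝ)/T) ^ 2
        = (1 - 2 * ((k:ℝ)/T)) * (if t ≤ k then (1:ℝ) else 0) + ((k:ℝ)/T) ^ 2 := by
      intro t
      split <;> ring
    simp_rw [hsq]
    rw [Finset.sum_add_distrib, ← Finset.mul_sum, hcard1, Finset.sum_const, Nat.card_Icc]
    simp only [Nat.add_sub_cancel, nsmul_eq_mul]
    rw [m]
    field_simp
    ring
  · intro g
    rw [Finset.sum_sub_distrib, Finset.sum_const, Nat.card_Icc]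
    simp only [Nat.add_sub_cancel, nsmul_eq_mul]
    have hrhs : ∀ t, ((if t ≤ k then (1:ℝ) else 0) - (k:ℝ)/T) * g t
        = (if t ≤ k then (1:ℝ) else 0) * g t - ((k:ℝ)/T) * g t := by
      intro t; ring
    simp_rw [hrhs]
    rw [Finset.sum_sub_distrib, hind g, ← Finset.mul_sum]
    congr 1
    field_simp

lemma cusum_rep (T k : ℕ) (hT : 2 ≤ T) (hk1 : 1 ≤ k) (hk2 : k ≤ T - 1)
    (μi : ℝ) (x : ℕ → ℝ) :
    cusum T (fun t => μi + x t) ((k:ℝ)/T)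
      = ∑ t ∈ Finset.Icc 1 T,
          ((Real.sqrt T)⁻¹ * ((if t ≤ k then (1:ℝ) else 0) - (k:ℝ)/T)) * x t := by
  have hT0 : (T:ℝ) ≠ 0 := by positivity
  have hTk : (T:ℝ) * ((k:ℝ)/T) = (k:ℝ) := by field_simp
  obtain ⟨h1, _, h3⟩ := coeff_facts T k hT hk1 hk2
  rw [cusum, hTk, Int.floor_natCast, Int.toNat_natCast]
  rw [h3 (fun t => μi + x t)]
  have hexp : ∀ t : ℕ, ((if t ≤ k then (1:ℝ) else 0) - (k:ℝ)/T) * (μi + x t)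
      = ((if t ≤ k then (1:ℝ) else 0) - (k:ℝ)/T) * μi
        + ((if t ≤ k then (1:ℝ) else 0) - (k:ℝ)/T) * x t := fun t => by ring
  simp_rw [hexp]
  rw [Finset.sum_add_distrib, ← Finset.sum_mul, h1, zero_mul, zero_add, Finset.mul_sum]
  exact Finset.sum_congr rfl fun t ht => (mul_assoc _ _ _).symm

lemma cusum_moment {Ω : Type*} [MeasurableSpace Ω] (P : Measure Ω) [IsProbabilityMeasure P]
    (T : ℕ) (hT : 2 ≤ T) (k : ℕ) (hk1 : 1 ≤ k) (hk2 : k ≤ T - 1)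
    (μi v : ℝ) (X : ℕ → Ω → ℝ)
    (hmeas : ∀ t, Measurable (X t))
    (hindep : iIndepFun (fun j : (Finset.Icc 1 T) => X (j : ℕ)) P)
    (hL2 : ∀ t ∈ Finset.Icc 1 T, MemLp (X t) 2 P)
    (hmean : ∀ t ∈ Finset.Icc 1 T, ∫ ω, X t ω ∂P = 0)
    (hvar : ∀ t ∈ Finset.Icc 1 T, ∫ ω, (X t ω) ^ 2 ∂P = v) :
    (∫ ω, (cusum T (fun t => μi + X t ω) ((k:ℝ)/T)) ^ 2 ∂P = m ((k:ℝ)/T) * v)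
    ∧ Integrable (fun ω => (cusum T (fun t => μi + X t ω) ((k:ℝ)/T)) ^ 2) P := by
  set d : ℕ → ℝ := fun t => (Real.sqrt T)⁻¹ * ((if t ≤ k then (1:ℝ) else 0) - (k:ℝ)/T)
    with hd
  have hrep : ∀ ω, cusum T (fun t => μi + X t ω) ((k:ℝ)/T)
      = ∑ t ∈ Finset.Icc 1 T, d t * X t ω :=
    fun ω => cusum_rep T k hT hk1 hk2 μi (fun t => X t ω)
  have hT0 : (T:ℝ) ≠ 0 := by positivity
  have hdsq : ∑ t ∈ Finset.Icc 1 T, (d t) ^ 2 = m ((k:ℝ)/T) := by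
    have h2 := (coeff_facts T k hT hk1 hk2).2.1
    have hsq : ((Real.sqrt T)⁻¹) ^ 2 = (T:ℝ)⁻¹ := by
      rw [inv_pow, Real.sq_sqrt (by positivity : (0:ℝ) ≤ (T:ℝ))]
    simp_rw [hd, mul_pow]
    rw [← Finset.mul_sum, h2, hsq]
    field_simp
  constructor
  · calc ∫ ω, (cusum T (fun t => μi + X t ω) ((k:ℝ)/T)) ^ 2 ∂P
        = ∫ ω, (∑ t ∈ Finset.Icc 1 T, d t * X t ω) ^ 2 ∂P :=
          integral_congr_ae (Filter.Eventually.of_forall fun ω => by simp only [hrep ω])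
      _ = (∑ t ∈ Finset.Icc 1 T, (d t) ^ 2) * v :=
          integral_sq_sum P T X v d hmeas hindep hL2 hmean hvar
      _ = m ((k:ℝ)/T) * v := by rw [hdsq]
  · have hm : MemLp (fun ω => ∑ t ∈ Finset.Icc 1 T, d t * X t ω) 2 P :=
      memLp_finset_sum _ fun t ht => (hL2 t ht).const_mul (d t)
    exact hm.integrable_sq.congr
      (Filter.Eventually.of_forall fun ω => by simp only [hrep ω])

/-- Under the null hypothesis of no change (panel data
`Y i t = μ i + e i t` with, for each panel `i`, independent square-integrable
mean-zero errors of variance `σ_i²`), the weighted least squares estimator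
`σ̂²_{N,T}(w)` is exactly unbiased for the mean variance `N⁻¹ ∑ σ_i²`. -/
theorem stmt15 {Ω : Type*} [MeasurableSpace Ω] (P : Measure Ω) [IsProbabilityMeasure P]
    (N T : ℕ) (hN : 1 ≤ N) (hT : 2 ≤ T)
    (μ : ℕ → ℝ) (σ2 : ℕ → ℝ) (e : ℕ → ℕ → Ω → ℝ)
    (hmeas : ∀ i t, Measurable (e i t))
    (hindep : ∀ i ∈ Finset.Icc 1 N,
      iIndepFun (fun k : (Finset.Icc 1 T) => e i (k : ℕ)) P)
    (hL2 : ∀ i ∈ Finset.Icc 1 N, ∀ t ∈ Finset.Icc 1 T, MemLp (e i t) 2 P)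
    (hmean : ∀ i ∈ Finset.Icc 1 N, ∀ t ∈ Finset.Icc 1 T, ∫ ω, e i t ω ∂P = 0)
    (hvar : ∀ i ∈ Finset.Icc 1 N, ∀ t ∈ Finset.Icc 1 T, ∫ ω, (e i t ω) ^ 2 ∂P = σ2 i)
    (Y : ℕ → ℕ → Ω → ℝ) (hY : ∀ i t ω, Y i t ω = μ i + e i t ω)
    (w : ℕ → ℝ) (hw : ∀ k ∈ Finset.Icc 1 (T - 1), 0 ≤ w k)
    (hw0 : ∃ k ∈ Finset.Icc 1 (T - 1), w k ≠ 0)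
    (σhat : Ω → ℝ)
    (hσhat : ∀ ω, σhat ω = (∑ k ∈ Finset.Icc 1 (T - 1), (m ((k : ℝ) / T)) ^ 2 * w k)⁻¹ *
      ∑ k ∈ Finset.Icc 1 (T - 1), m ((k : ℝ) / T) * w k *
        ((N : ℝ)⁻¹ * ∑ i ∈ Finset.Icc 1 N,
          (cusum T (fun t => Y i t ω) ((k : ℝ) / T)) ^ 2)) :
    ∫ ω, σhat ω ∂P = (N : ℝ)⁻¹ * ∑ i ∈ Finset.Icc 1 N, σ2 i := by
  have key : ∀ k ∈ Finset.Icc 1 (T - 1), ∀ i ∈ Finset.Icc 1 N,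
      (∫ ω, (cusum T (fun t => Y i t ω) ((k:ℝ)/T)) ^ 2 ∂P = m ((k:ℝ)/T) * σ2 i)
      ∧ Integrable (fun ω => (cusum T (fun t => Y i t ω) ((k:ℝ)/T)) ^ 2) P := by
    intro k hk i hi
    rw [Finset.mem_Icc] at hk
    have h := cusum_moment P T hT k hk.1 hk.2 (μ i) (σ2 i) (e i) (hmeas i)
      (hindep i hi) (hL2 i hi) (hmean i hi) (hvar i hi)
    simpa only [← hY] using h
  set C : ℝ := ∑ k ∈ Finset.Icc 1 (T - 1), (m ((k : ℝ) / T)) ^ 2 * w k with hC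
  have hmpos : ∀ k ∈ Finset.Icc 1 (T - 1), 0 < m ((k:ℝ)/T) := by
    intro k hk
    rw [Finset.mem_Icc] at hk
    have hTpos : (0:ℝ) < (T:ℝ) := by positivity
    have h1 : (0:ℝ) < (k:ℝ)/T := by
      apply div_pos _ hTpos
      exact_mod_cast hk.1
    have h2 : (k:ℝ)/T < 1 := by
      rw [div_lt_one hTpos]
      exact_mod_cast (by omega : k < T)
    rw [m]
    exact mul_pos h1 (by linarith)
  have hCpos : 0 < C := by
    obtain ⟨k0, hk0, hwk0⟩ := hw0
    refine Finset.sum_pos' (fun k hk => mul_nonneg (sq_nonneg _) (hw k hk)) ?_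
    exact ⟨k0, hk0, mul_pos (pow_pos (hmpos k0 hk0) 2) ((hw k0 hk0).lt_of_ne (Ne.symm hwk0))⟩
  have hintk : ∀ k ∈ Finset.Icc 1 (T - 1),
      Integrable (fun ω => m ((k:ℝ)/T) * w k * ((N:ℝ)⁻¹ *
        ∑ i ∈ Finset.Icc 1 N, (cusum T (fun t => Y i t ω) ((k:ℝ)/T)) ^ 2)) P := by
    intro k hk
    have h1 : Integrable (fun ω =>
        ∑ i ∈ Finset.Icc 1 N, (cusum T (fun t => Y i t ω) ((k:ℝ)/T)) ^ 2) P :=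
      integrable_finset_sum _ fun i hi => (key k hk i hi).2
    exact (h1.const_mul ((N:ℝ)⁻¹)).const_mul (m ((k:ℝ)/T) * w k)
  have hterm : ∀ k ∈ Finset.Icc 1 (T - 1),
      ∫ ω, m ((k:ℝ)/T) * w k * ((N:ℝ)⁻¹ *
        ∑ i ∈ Finset.Icc 1 N, (cusum T (fun t => Y i t ω) ((k:ℝ)/T)) ^ 2) ∂P
      = (m ((k:ℝ)/T)) ^ 2 * w k * ((N:ℝ)⁻¹ * ∑ i ∈ Finset.Icc 1 N, σ2 i) := by
    intro k hk
    rw [integral_const_mul, integral_const_mul,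
      integral_finset_sum _ (fun i hi => (key k hk i hi).2)]
    rw [Finset.sum_congr rfl (fun i hi => (key k hk i hi).1), ← Finset.mul_sum]
    ring
  calc ∫ ω, σhat ω ∂P
      = ∫ ω, C⁻¹ * ∑ k ∈ Finset.Icc 1 (T - 1), m ((k:ℝ)/T) * w k *
          ((N:ℝ)⁻¹ * ∑ i ∈ Finset.Icc 1 N,
            (cusum T (fun t => Y i t ω) ((k:ℝ)/T)) ^ 2) ∂P := by
        exact integral_congr_ae (Filter.Eventually.of_forall fun ω => hσhat ω)
    _ = C⁻¹ * ∑ k ∈ Finset.Icc 1 (T - 1), ∫ ω, m ((k:ℝ)/T) * w k *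
          ((N:ℝ)⁻¹ * ∑ i ∈ Finset.Icc 1 N,
            (cusum T (fun t => Y i t ω) ((k:ℝ)/T)) ^ 2) ∂P := by
        rw [integral_const_mul, integral_finset_sum _ hintk]
    _ = C⁻¹ * ∑ k ∈ Finset.Icc 1 (T - 1),
          (m ((k:ℝ)/T)) ^ 2 * w k * ((N:ℝ)⁻¹ * ∑ i ∈ Finset.Icc 1 N, σ2 i) := by
        rw [Finset.sum_congr rfl hterm]
    _ = C⁻¹ * (C * ((N:ℝ)⁻¹ * ∑ i ∈ Finset.Icc 1 N, σ2 i)) := by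
        rw [← Finset.sum_mul]
    _ = (N:ℝ)⁻¹ * ∑ i ∈ Finset.Icc 1 N, σ2 i := by
        rw [inv_mul_cancel_left₀ hCpos.ne']
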